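/- If G is a group of order 16 generated by two elements x, y satisfying x⁴ = 1, y⁴ = 1, and y⁻¹xy = x⁻¹ (so G ≅ C₄ ⋊ C₄), then G is not a Cayley integral group. -/

import Mathlib

open scoped Classical

/-- The adjacency matrix of the undirected Cayley graph `Cay(G,S)`:
the `(a,b)` entry is `1` if `a * b⁻¹ ∈ S` and `0` otherwise. -/
noncomputable def cayleyAdjMatrix {G : Type*} [Group G] [Fintype G] (S : Set G) :
    Matrix G G ℝ :=
  Matrix.of fun a b => if a * b⁻¹ ∈ S then (1 : ℝ) else 0

/-- A finite group `G` is *Cayley integral* if for every subset `S ⊆ G` with `1 ∉ S` and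
`S = S⁻¹`, every eigenvalue of the adjacency matrix of the Cayley graph `Cay(G,S)`
is an integer. -/
def IsCayleyIntegral (G : Type*) [Group G] [Fintype G] : Prop :=
  ∀ S : Set G, (1 : G) ∉ S → (∀ s ∈ S, s⁻¹ ∈ S) →
    ∀ μ ∈ spectrum ℝ (cayleyAdjMatrix S), ∃ k : ℤ, μ = (k : ℝ)

/-! ### Auxiliary explicit model of `C₄ ⋊ C₄` -/

/-- Explicit model of `C₄ ⋊ C₄` as a type. -/
def HC4 : Type := ZMod 4 × ZMod 4

instance : Fintype HC4 := inferInstanceAs (Fintype (ZMod 4 × ZMod 4))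
instance : DecidableEq HC4 := inferInstanceAs (DecidableEq (ZMod 4 × ZMod 4))

set_option maxHeartbeats 2000000 in
instance : Group HC4 where
  mul p q := ((p.1 + (if p.2.val % 2 = 0 then q.1 else -q.1), p.2 + q.2) :
    ZMod 4 × ZMod 4)
  one := ((0, 0) : ZMod 4 × ZMod 4)
  inv p := (((if p.2.val % 2 = 0 then -p.1 else p.1), -p.2) : ZMod 4 × ZMod 4)
  mul_assoc := by decide
  one_mul := by decide
  mul_one := by decide
  inv_mul_cancel := by decide

/-- constructor -/
def mkH (a b : ZMod 4) : HC4 := ((a, b) : ZMod 4 × ZMod 4)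

/-- connection set in the model -/
def SfinH : Finset HC4 := {mkH 0 1, mkH 0 3, mkH 1 1, mkH 1 3}

/-- rational part of the eigenvector -/
def uH : HC4 → ℤ := fun p =>
  if p.2.val % 2 = 0 then (if p.1.val ≤ 1 then -1 else 1) else 0

/-- √2-part of the eigenvector -/
def zH : HC4 → ℤ := fun p =>
  if p.2.val % 2 = 0 then 0 else (if p.1 = 0 then -1 else if p.1 = 2 then 1 else 0)

/-- integer adjacency matrix of the model -/
def NH : HC4 → HC4 → ℤ := fun q p => if q * p⁻¹ ∈ SfinH then 1 else 0

set_option maxHeartbeats 2000000 in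
lemma hu_sum : ∀ q : HC4, ∑ p : HC4, NH q p * uH p = 4 * zH q := by decide

set_option maxHeartbeats 2000000 in
lemma hz_sum : ∀ q : HC4, ∑ p : HC4, NH q p * zH p = 2 * uH q := by decide

/-- the real eigenvector on the model -/
noncomputable def wH : HC4 → ℝ := fun p => (uH p : ℝ) + Real.sqrt 2 * (zH p : ℝ)

/-! ### power lemmas -/

private lemma pow_mod4 {G : Type*} [Group G] {x : G} (hx : x ^ 4 = 1) (n : ℕ) :
    x ^ (n % 4) = x ^ n := by
  conv_rhs => rw [← Nat.div_add_mod n 4]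
  rw [pow_add, pow_mul, hx, one_pow, one_mul]

private lemma pow_val_add {G : Type*} [Group G] {x : G} (hx : x ^ 4 = 1) (a c : ZMod 4) :
    x ^ (a + c).val = x ^ a.val * x ^ c.val := by
  rw [ZMod.val_add, pow_mod4 hx, pow_add]

private lemma pow_val_neg {G : Type*} [Group G] {x : G} (hx : x ^ 4 = 1) (c : ZMod 4) :
    x ^ (-c).val = (x ^ c.val)⁻¹ := by
  apply eq_inv_of_mul_eq_one_left
  rw [← pow_add]
  have h4 : (-c).val + c.val = 0 ∨ (-c).val + c.val = 4 := by revert c; decide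
  rcases h4 with h | h
  · rw [h, pow_zero]
  · rw [h, hx]

/-- A group of order 16 generated by elements `x, y` with `x⁴ = y⁴ = 1` and
`y⁻¹xy = x⁻¹` (i.e. `C₄ ⋊ C₄`) is not Cayley integral. -/
theorem c4_rtimes_c4_not_cayley_integral (G : Type*) [Group G] [Fintype G]
    (hcard : Fintype.card G = 16) (x y : G) (hx : x ^ 4 = 1) (hy : y ^ 4 = 1)
    (hxy : y⁻¹ * x * y = x⁻¹) (hgen : Subgroup.closure ({x, y} : Set G) = ⊤) :
    ¬ IsCayleyIntegral G := by
  intro hCI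
  -- basic commutation relations
  have h1 : x * y = y * x⁻¹ := by rw [← hxy]; group
  have h3 : y⁻¹ * x⁻¹ * y = x := by
    have h : (y⁻¹ * x * y)⁻¹ = x⁻¹⁻¹ := by rw [hxy]
    simpa [mul_inv_rev, mul_assoc] using h
  have h2 : y * x = x⁻¹ * y := by
    conv_lhs => rw [← h3]
    group
  have key : ∀ t : G, y * t = t⁻¹ * y → ∀ n : ℕ, y * t ^ n = (t ^ n)⁻¹ * y := by
    intro t ht n
    induction n with
    | zero => simp
    | succ n ih =>
      calc y * t ^ (n + 1) = (y * t ^ n) * t := by rw [pow_succ, mul_assoc]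
        _ = (t ^ n)⁻¹ * (y * t) := by rw [ih, mul_assoc]
        _ = (t ^ n)⁻¹ * (t⁻¹ * y) := by rw [ht]
        _ = (t ^ (n + 1))⁻¹ * y := by rw [pow_succ', mul_inv_rev, mul_assoc]
  have comm2 : ∀ m n : ℕ,
      y ^ m * x ^ n = (if m % 2 = 0 then x ^ n else (x ^ n)⁻¹) * y ^ m ∧
      y ^ m * (x ^ n)⁻¹ = (if m % 2 = 0 then (x ^ n)⁻¹ else x ^ n) * y ^ m := by
    intro m
    induction m with
    | zero => intro n; simp
    | succ m ih =>
      intro n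
      have K1 := key x h2 n
      have K2 : y * (x ^ n)⁻¹ = x ^ n * y := by
        have := key x⁻¹ (by rw [inv_inv]; exact h1.symm) n
        simpa [inv_pow, inv_inv] using this
      obtain ⟨ih1, ih2⟩ := ih n
      have hpar : ((m + 1) % 2 = 0) ↔ ¬ (m % 2 = 0) := by omega
      constructor
      · calc y ^ (m + 1) * x ^ n = y ^ m * (y * x ^ n) := by rw [pow_succ, mul_assoc]
          _ = (y ^ m * (x ^ n)⁻¹) * y := by rw [K1, ← mul_assoc]
          _ = (if m % 2 = 0 then (x ^ n)⁻¹ else x ^ n) * y ^ (m + 1) := by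
              rw [ih2, mul_assoc, ← pow_succ]
          _ = (if (m + 1) % 2 = 0 then x ^ n else (x ^ n)⁻¹) * y ^ (m + 1) := by
              by_cases hm : m % 2 = 0 <;> simp [hm, hpar]
      · calc y ^ (m + 1) * (x ^ n)⁻¹ = y ^ m * (y * (x ^ n)⁻¹) := by
              rw [pow_succ, mul_assoc]
          _ = (y ^ m * x ^ n) * y := by rw [K2, ← mul_assoc]
          _ = (if m % 2 = 0 then x ^ n else (x ^ n)⁻¹) * y ^ (m + 1) := by
              rw [ih1, mul_assoc, ← pow_succ]
          _ = (if (m + 1) % 2 = 0 then (x ^ n)⁻¹ else x ^ n) * y ^ (m + 1) := by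
              by_cases hm : m % 2 = 0 <;> simp [hm, hpar]
  -- the homomorphism from the model
  have hmul : ∀ p q : HC4,
      x ^ (p * q).1.val * y ^ (p * q).2.val
        = (x ^ p.1.val * y ^ p.2.val) * (x ^ q.1.val * y ^ q.2.val) := by
    intro p q
    have hpq1 : (p * q).1 = p.1 + (if p.2.val % 2 = 0 then q.1 else -q.1) := rfl
    have hpq2 : (p * q).2 = p.2 + q.2 := rfl
    rw [hpq1, hpq2, pow_val_add hy]
    have hc := (comm2 p.2.val q.1.val).1
    by_cases hp : p.2.val % 2 = 0
    · rw [if_pos hp] at hc ⊢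
      rw [pow_val_add hx]
      calc x ^ p.1.val * x ^ q.1.val * (y ^ p.2.val * y ^ q.2.val)
          = x ^ p.1.val * ((x ^ q.1.val * y ^ p.2.val) * y ^ q.2.val) := by group
        _ = x ^ p.1.val * ((y ^ p.2.val * x ^ q.1.val) * y ^ q.2.val) := by rw [← hc]
        _ = x ^ p.1.val * y ^ p.2.val * (x ^ q.1.val * y ^ q.2.val) := by group
    · rw [if_neg hp] at hc ⊢
      rw [pow_val_add hx, pow_val_neg hx]
      calc x ^ p.1.val * (x ^ q.1.val)⁻¹ * (y ^ p.2.val * y ^ q.2.val)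
          = x ^ p.1.val * (((x ^ q.1.val)⁻¹ * y ^ p.2.val) * y ^ q.2.val) := by group
        _ = x ^ p.1.val * ((y ^ p.2.val * x ^ q.1.val) * y ^ q.2.val) := by rw [← hc]
        _ = x ^ p.1.val * y ^ p.2.val * (x ^ q.1.val * y ^ q.2.val) := by group
  let F : HC4 →* G := MonoidHom.mk' (fun p : HC4 => x ^ p.1.val * y ^ p.2.val) hmul
  have hFx : F (mkH 1 0) = x := by
    show x ^ (1 : ZMod 4).val * y ^ (0 : ZMod 4).val = x
    norm_num [show (1 : ZMod 4).val = 1 from rfl, show (0 : ZMod 4).val = 0 from rfl]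
  have hFy : F (mkH 0 1) = y := by
    show x ^ (0 : ZMod 4).val * y ^ (1 : ZMod 4).val = y
    norm_num [show (1 : ZMod 4).val = 1 from rfl, show (0 : ZMod 4).val = 0 from rfl]
  have hrange : F.range = ⊤ := by
    rw [← top_le_iff, ← hgen, Subgroup.closure_le]
    intro g hg
    simp only [Set.mem_insert_iff, Set.mem_singleton_iff] at hg
    rcases hg with rfl | rfl
    · exact ⟨mkH 1 0, hFx⟩
    · exact ⟨mkH 0 1, hFy⟩
  have hsurj : Function.Surjective F := MonoidHom.range_eq_top.mp hrange
  have hcardH : Fintype.card HC4 = 16 := rfl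
  have hbij : Function.Bijective F :=
    (Fintype.bijective_iff_surjective_and_card F).mpr ⟨hsurj, by rw [hcardH, hcard]⟩
  let e : HC4 ≃* G := MulEquiv.ofBijective F hbij
  let S : Set G := e '' (SfinH : Set HC4)
  let v : G → ℝ := fun g => wH (e.symm g)
  have hs2 : Real.sqrt 2 * Real.sqrt 2 = 2 := Real.mul_self_sqrt (by norm_num)
  set μ : ℝ := 2 * Real.sqrt 2 with hμdef
  -- eigenvector equation
  have hAv : (cayleyAdjMatrix S).mulVec v = μ • v := by
    funext g
    obtain ⟨q, rfl⟩ := e.surjective g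
    show ∑ h : G, (if e q * h⁻¹ ∈ S then (1 : ℝ) else 0) * v h = μ * v (e q)
    rw [← Equiv.sum_comp e.toEquiv
      (fun h => (if e q * h⁻¹ ∈ S then (1 : ℝ) else 0) * v h)]
    have hcond : ∀ p : HC4, (e q * (e p)⁻¹ ∈ S) ↔ q * p⁻¹ ∈ SfinH := by
      intro p
      rw [← map_inv, ← map_mul]
      exact (e.injective.mem_set_image).trans Finset.mem_coe
    have hterm : ∀ p : HC4, (if e q * (e.toEquiv p)⁻¹ ∈ S then (1 : ℝ) else 0)
        * v (e.toEquiv p) = (NH q p : ℝ) * ((uH p : ℝ) + Real.sqrt 2 * (zH p : ℝ)) := by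
      intro p
      have hv : v (e.toEquiv p) = (uH p : ℝ) + Real.sqrt 2 * (zH p : ℝ) := by
        show wH (e.symm (e p)) = _
        rw [MulEquiv.symm_apply_apply]
        rfl
      rw [hv]
      by_cases hm : q * p⁻¹ ∈ SfinH
      · rw [if_pos (show e q * (e.toEquiv p)⁻¹ ∈ S from (hcond p).mpr hm)]
        simp [NH, hm]
      · rw [if_neg (show e q * (e.toEquiv p)⁻¹ ∉ S from fun hc => hm ((hcond p).mp hc))]
        simp [NH, hm]
    rw [Finset.sum_congr rfl (fun p _ => hterm p)]
    have hvq : v (e q) = (uH q : ℝ) + Real.sqrt 2 * (zH q : ℝ) := by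
      show wH (e.symm (e q)) = _
      rw [MulEquiv.symm_apply_apply]
      rfl
    rw [hvq]
    have hsum : ∑ p : HC4, (NH q p : ℝ) * ((uH p : ℝ) + Real.sqrt 2 * (zH p : ℝ))
        = ((∑ p : HC4, NH q p * uH p : ℤ) : ℝ)
          + Real.sqrt 2 * ((∑ p : HC4, NH q p * zH p : ℤ) : ℝ) := by
      push_cast
      rw [Finset.mul_sum, ← Finset.sum_add_distrib]
      exact Finset.sum_congr rfl (fun p _ => by ring)
    rw [hsum, hu_sum q, hz_sum q]
    push_cast
    linear_combination (-2 * (zH q : ℝ)) * hs2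
  -- the eigenvector is nonzero
  have hvne : v ≠ 0 := by
    intro h0
    have h1 : v (e 1) = 0 := by rw [h0]; rfl
    have h2 : v (e 1) = -1 := by
      show wH (e.symm (e 1)) = -1
      rw [MulEquiv.symm_apply_apply]
      show (uH 1 : ℝ) + Real.sqrt 2 * (zH 1 : ℝ) = -1
      rw [show uH 1 = -1 from rfl, show zH 1 = 0 from rfl]
      norm_num
    rw [h1] at h2
    norm_num at h2
  -- μ is an eigenvalue
  have hmem : μ ∈ spectrum ℝ (cayleyAdjMatrix S) := by
    rw [spectrum.mem_iff]
    intro hunit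
    have hker : (algebraMap ℝ (Matrix G G ℝ) μ - cayleyAdjMatrix S).mulVec v = 0 := by
      rw [Matrix.sub_mulVec, hAv, Algebra.algebraMap_eq_smul_one,
        Matrix.smul_mulVec, Matrix.one_mulVec, sub_self]
    have hdet : (algebraMap ℝ (Matrix G G ℝ) μ - cayleyAdjMatrix S).det = 0 :=
      Matrix.exists_mulVec_eq_zero_iff.mp ⟨v, hvne, hker⟩
    rw [Matrix.isUnit_iff_isUnit_det, hdet] at hunit
    exact hunit.ne_zero rfl
  -- S is a valid connection set
  have h1S : (1 : G) ∉ S := by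
    rintro ⟨p, hp, hep⟩
    have hp1 : p = 1 := e.injective (by rw [hep, map_one])
    rw [hp1, Finset.mem_coe] at hp
    exact absurd hp (by decide)
  have hinvS : ∀ s ∈ S, s⁻¹ ∈ S := by
    rintro s ⟨p, hp, rfl⟩
    have hclosed : ∀ r : HC4, r ∈ SfinH → r⁻¹ ∈ SfinH := by decide
    exact ⟨p⁻¹, Finset.mem_coe.mpr (hclosed p (Finset.mem_coe.mp hp)),
      map_inv e p⟩
  obtain ⟨k, hk⟩ := hCI S h1S hinvS μ hmem
  have hirr : Irrational μ := by
    rw [hμdef]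
    have h2 := irrational_sqrt_two.natCast_mul (m := 2) two_ne_zero
    simpa using h2
  exact absurd hk (hirr.ne_int k)
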